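/- arXiv:2103.00382 — 3 statements merged into one kernel-verified Lean document; each statement's English description precedes it below -/
import Mathlib

section
/- With notation as in the restricted root space decomposition, for any X ∈ t and any restricted root α with α(X) ≠ 0, the map ad(X) restricts to a linear isomorphism from k_{t,[α]} onto p_{t,[α]}; in particular dim k_{t,[α]} = dim p_{t,[α]}. -/
open scoped RealInnerProductSpace

noncomputable section

/-- The restricted root space `g_{t,[α]} = ⋂_{X ∈ t} ker (ad(X)² + 4π²α(X)²·id)` of a
maximal abelian subalgebra `t ⊆ p`, for a linear form `α : t → ℝ`.  The Lie bracket of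
`g` is given by the bilinear map `br`. -/
def restrictedRootSpace {g : Type*} [NormedAddCommGroup g] [InnerProductSpace ℝ g]
    (br : g →ₗ[ℝ] g →ₗ[ℝ] g) (t : Submodule ℝ g) (α : t →ₗ[ℝ] ℝ) : Submodule ℝ g :=
  ⨅ X : t, LinearMap.ker
    ((br (X : g)) ∘ₗ (br (X : g)) + (4 * Real.pi ^ 2 * (α X) ^ 2) • LinearMap.id)

/-- with notation as in the restricted root space decomposition, for any
`X ∈ t` and any restricted root `α` with `α(X) ≠ 0`, the map `ad X = br X` restricts to
a linear isomorphism from `k_{t,[α]} = g_{t,[α]} ∩ k` onto `p_{t,[α]} = g_{t,[α]} ∩ p`;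
in particular `dim k_{t,[α]} = dim p_{t,[α]}`. -/
theorem stmt_3 (g : Type*) [NormedAddCommGroup g] [InnerProductSpace ℝ g]
    [FiniteDimensional ℝ g]
    (br : g →ₗ[ℝ] g →ₗ[ℝ] g)
    (halt : ∀ x : g, br x x = 0)
    (hjacobi : ∀ x y z : g, br x (br y z) = br (br x y) z + br y (br x z))
    (hinv : ∀ x y z : g, ⟪br x y, z⟫ = -⟪y, br x z⟫)
    (σ : g →ₗ[ℝ] g) (hσbr : ∀ x y, σ (br x y) = br (σ x) (σ y))
    (hσinv : ∀ x, σ (σ x) = x)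
    (k p : Submodule ℝ g)
    (hk : ∀ x, x ∈ k ↔ σ x = x) (hp : ∀ x, x ∈ p ↔ σ x = -x)
    (t : Submodule ℝ g) (htp : t ≤ p)
    (htab : ∀ x ∈ t, ∀ y ∈ t, br x y = 0)
    (htmax : ∀ t' : Submodule ℝ g, t' ≤ p → (∀ x ∈ t', ∀ y ∈ t', br x y = 0) →
      t ≤ t' → t' = t)
    -- `α` is a restricted root:
    (α : t →ₗ[ℝ] ℝ) (hα : α ≠ 0) (hαroot : restrictedRootSpace br t α ≠ ⊥)
    (X : t) (hX : α X ≠ 0) :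
    Set.BijOn (fun z => br (X : g) z)
        ((restrictedRootSpace br t α ⊓ k : Submodule ℝ g) : Set g)
        ((restrictedRootSpace br t α ⊓ p : Submodule ℝ g) : Set g) ∧
      Module.finrank ℝ (restrictedRootSpace br t α ⊓ k : Submodule ℝ g)
        = Module.finrank ℝ (restrictedRootSpace br t α ⊓ p : Submodule ℝ g) := by

  classical
  set S := restrictedRootSpace br t α with hS
  set c : ℝ := 4 * Real.pi ^ 2 * (α X) ^ 2 with hc
  have hcne : c ≠ 0 := by
    have : Real.pi ≠ 0 := Real.pi_ne_zero
    simp [hc, pow_eq_zero_iff]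
    exact hX
  have memS : ∀ z : g, z ∈ S ↔
      ∀ Y : t, br (Y : g) (br (Y : g) z) + (4 * Real.pi ^ 2 * (α Y) ^ 2) • z = 0 := by
    intro z
    simp [hS, restrictedRootSpace, Submodule.mem_iInf, LinearMap.mem_ker]
  -- ad X and ad Y commute for Y ∈ t
  have hcomm : ∀ (Y : t) (w : g), br (Y : g) (br (X : g) w) = br (X : g) (br (Y : g) w) := by
    intro Y w
    have := hjacobi (Y : g) (X : g) w
    rw [htab _ Y.2 _ X.2] at this
    simpa using this
  -- ad X preserves S
  have hstab : ∀ z ∈ S, br (X : g) z ∈ S := by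
    intro z hz
    rw [memS] at hz ⊢
    intro Y
    have := hz Y
    calc br (Y : g) (br (Y : g) (br (X : g) z)) + (4 * Real.pi ^ 2 * (α Y) ^ 2) • br (X : g) z
        = br (X : g) (br (Y : g) (br (Y : g) z) + (4 * Real.pi ^ 2 * (α Y) ^ 2) • z) := by
          rw [hcomm, hcomm]; simp [map_add, map_smul]
      _ = 0 := by rw [this]; simp
  have hσX : σ (X : g) = -(X : g) := (hp _).1 (htp X.2)
  -- ad X maps k to p and p to k
  have hkp : ∀ z ∈ k, br (X : g) z ∈ p := by
    intro z hz
    rw [hp]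
    rw [hσbr, hσX, (hk z).1 hz]
    simp [map_neg]
  have hpk : ∀ z ∈ p, br (X : g) z ∈ k := by
    intro z hz
    rw [hk]
    rw [hσbr, hσX, (hp z).1 hz]
    simp [map_neg]
  -- (ad X)^2 = -c on S
  have hsq : ∀ z ∈ S, br (X : g) (br (X : g) z) = -(c • z) := by
    intro z hz
    have := (memS z).1 hz X
    linear_combination (norm := module) this
  have hMapsTo : ∀ z ∈ (S ⊓ k : Submodule ℝ g), br (X : g) z ∈ (S ⊓ p : Submodule ℝ g) := by
    intro z hz
    exact ⟨hstab z hz.1, hkp z hz.2⟩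
  have hInj : ∀ z ∈ (S ⊓ k : Submodule ℝ g), br (X : g) z = 0 → z = 0 := by
    intro z hz h0
    have := hsq z hz.1
    rw [h0, map_zero] at this
    have h1 : c • z = 0 := neg_eq_zero.1 this.symm
    exact (smul_eq_zero.1 h1).resolve_left hcne
  have hSurj : ∀ w ∈ (S ⊓ p : Submodule ℝ g), ∃ z ∈ (S ⊓ k : Submodule ℝ g),
      br (X : g) z = w := by
    intro w hw
    refine ⟨-(c⁻¹ • br (X : g) w), ⟨?_, ?_⟩, ?_⟩
    · exact Submodule.neg_mem _ (Submodule.smul_mem _ _ (hstab w hw.1))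
    · exact Submodule.neg_mem _ (Submodule.smul_mem _ _ (hpk w hw.2))
    · rw [map_neg, map_smul, hsq w hw.1]
      rw [smul_neg, smul_smul, inv_mul_cancel₀ hcne]
      simp
  have hbij : Set.BijOn (fun z => br (X : g) z)
      ((S ⊓ k : Submodule ℝ g) : Set g) ((S ⊓ p : Submodule ℝ g) : Set g) := by
    refine ⟨fun z hz => hMapsTo z hz, ?_, ?_⟩
    · intro a ha b hb hab
      have : br (X : g) (a - b) = 0 := by simp only at hab; rw [map_sub, hab, sub_self]
      have := hInj (a - b) (Submodule.sub_mem _ ha hb) this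
      exact sub_eq_zero.1 this
    · intro w hw
      obtain ⟨z, hz, hzw⟩ := hSurj w hw
      exact ⟨z, hz, hzw⟩
  refine ⟨hbij, ?_⟩
  let φ : (S ⊓ k : Submodule ℝ g) →ₗ[ℝ] (S ⊓ p : Submodule ℝ g) :=
    (br (X : g)).restrict hMapsTo
  have hφbij : Function.Bijective φ := by
    constructor
    · intro a b hab
      have : br (X : g) (a : g) = br (X : g) (b : g) := congrArg Subtype.val hab
      exact Subtype.ext (hbij.injOn a.2 b.2 this)
    · intro w
      obtain ⟨z, hz, hzw⟩ := hSurj (w : g) w.2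
      exact ⟨⟨z, hz⟩, Subtype.ext hzw⟩
  exact (LinearEquiv.ofBijective φ hφbij).finrank_eq
end
end

section
/- For X ∈ t₀, the tangent space of the real flag manifold R_{exp(X)·p₀} = exp(X)·Λ at X₀ equals ⊕_{α∈R⁺_{X₀}} { cos(2πα(X))η − sin(2πα(X)) J_{O,X₀}(η) : η ∈ p_{X₀,α} }, where J_{O,X₀} = (−1/(2πα(X₀))) ad(X₀) restricted to [g,X₀] (on the α-component). -/
open scoped RealInnerProductSpace
open Nat

noncomputable section

/-- odd sine-like coefficient series is summable -/
lemma summable_oddCoef (c : ℝ) :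
    Summable (fun k : ℕ => (-1 : ℝ)^k * c^(2*k) / ((2*k+1)! : ℝ)) := by
  refine Summable.of_norm_bounded (Real.summable_pow_div_factorial (c^2)) ?_
  intro k
  have h1 : ‖(-1 : ℝ)^k * c^(2*k) / ((2*k+1)! : ℝ)‖ = (c^2)^k / ((2*k+1)! : ℝ) := by
    rw [Real.norm_eq_abs, abs_div, abs_mul, abs_pow, abs_pow, abs_neg, abs_one, one_pow,
      one_mul, abs_of_nonneg (by positivity : (0:ℝ) ≤ ((2*k+1)! : ℝ)), pow_mul, sq_abs]
  rw [h1]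
  apply div_le_div_of_nonneg_left ?_ ?_ ?_
  · positivity
  · positivity
  · exact_mod_cast Nat.factorial_le (by omega)

lemma pow_two_apply {g : Type*} [NormedAddCommGroup g] [NormedSpace ℝ g]
    (A : g →L[ℝ] g) (c : ℝ) {ξ : g} (h : A (A ξ) = (-(c^2)) • ξ) (m : ℕ) :
    (A ^ (2*m)) ξ = ((-(c^2))^m) • ξ := by
  induction m with
  | zero => simp
  | succ m ih =>
    have h2 : 2*(m+1) = (2*m) + 1 + 1 := by ring
    rw [h2, pow_succ, pow_succ, ContinuousLinearMap.mul_apply, ContinuousLinearMap.mul_apply,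
      h, map_smul, ih, smul_smul]
    congr 1
    rw [pow_succ]
    ring

lemma exp_apply_sq {g : Type*} [NormedAddCommGroup g] [NormedSpace ℝ g] [CompleteSpace g]
    (A : g →L[ℝ] g) (η : g) (c : ℝ) (h : A (A η) = (-(c^2)) • η) :
    NormedSpace.exp A η = Real.cos c • η
      + (∑' k : ℕ, (-1 : ℝ)^k * c^(2*k) / ((2*k+1)! : ℝ)) • A η := by
  have hsum : Summable fun n : ℕ => ((n ! : ℝ)⁻¹) • A ^ n := NormedSpace.expSeries_summable' A
  have h0 : NormedSpace.exp A η = ∑' n : ℕ, ((n ! : ℝ)⁻¹) • (A ^ n) η := by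
    rw [NormedSpace.exp_eq_tsum (𝕂 := ℝ)]
    have := (hsum.hasSum.mapL (ContinuousLinearMap.apply ℝ g η)).tsum_eq
    simpa using this.symm
  set f : ℕ → g := fun n => ((n ! : ℝ)⁻¹) • (A ^ n) η with hf
  have hfs : Summable f := by
    have := hsum.mapL (ContinuousLinearMap.apply ℝ g η)
    simpa [hf] using this
  have heven : Summable fun k : ℕ => f (2*k) :=
    hfs.comp_injective (fun a b hab => by omega)
  have hodd : Summable fun k : ℕ => f (2*k+1) :=
    hfs.comp_injective (fun a b hab => by omega)
  have hAη : A (A (A η)) = (-(c^2)) • (A η) := by rw [h, map_smul]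
  have he : ∀ k : ℕ, f (2*k) = ((-1 : ℝ)^k * c^(2*k) / ((2*k)! : ℝ)) • η := by
    intro k
    rw [hf]
    simp only []
    rw [pow_two_apply A c h k, smul_smul]
    congr 1
    rw [neg_pow, ← pow_mul]
    field_simp
  have ho : ∀ k : ℕ, f (2*k+1) = ((-1 : ℝ)^k * c^(2*k) / ((2*k+1)! : ℝ)) • A η := by
    intro k
    rw [hf]
    simp only []
    rw [pow_succ, ContinuousLinearMap.mul_apply, pow_two_apply A c hAη k, smul_smul]
    congr 1
    rw [neg_pow, ← pow_mul]
    field_simp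
  have hsplit := tsum_even_add_odd heven hodd
  rw [h0, ← hsplit]
  have h1 : ∑' k : ℕ, f (2*k) = Real.cos c • η := by
    simp_rw [he]
    rw [Summable.tsum_smul_const (Real.hasSum_cos c).summable, ← Real.cos_eq_tsum]
  have h2 : ∑' k : ℕ, f (2*k+1)
      = (∑' k : ℕ, ((-1 : ℝ)^k * c^(2*k) / ((2*k+1)! : ℝ))) • A η := by
    simp_rw [ho]
    rw [Summable.tsum_smul_const (summable_oddCoef c)]
  rw [h1, h2]

/-- `c * (odd coefficient sum) = sin c` -/
lemma mul_oddCoef (c : ℝ) :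
    c * (∑' k : ℕ, (-1 : ℝ)^k * c^(2*k) / ((2*k+1)! : ℝ)) = Real.sin c := by
  rw [← tsum_mul_left, Real.sin_eq_tsum]
  congr 1
  funext k
  rw [pow_succ]
  ring

lemma map_eq_of_eqOn {R M N : Type*} [Ring R] [AddCommGroup M] [Module R M]
    [AddCommGroup N] [Module R N] (f g' : M →ₗ[R] N) (S : Submodule R M)
    (h : ∀ x ∈ S, f x = g' x) : S.map f = S.map g' := by
  ext y
  simp only [Submodule.mem_map]
  constructor <;> rintro ⟨x, hx, rfl⟩
  · exact ⟨x, hx, (h x hx).symm⟩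
  · exact ⟨x, hx, h x hx⟩

/-- For `X ∈ t₀`, the tangent space of the real flag manifold
`R_{exp(X)·p₀} = exp(X)·Λ` at `X₀` equals
`⊕_{α ∈ R⁺_{X₀}} { cos(2πα(X))η − sin(2πα(X)) J_{O,X₀}(η) : η ∈ p_{X₀,α} }`,
where `J_{O,X₀} = (−1/(2πα(X₀))) ad(X₀)` on the `α`-component.

Since `X ∈ t₀` fixes `X₀` we have `exp(X)·Λ ∋ X₀`, and its tangent space at `X₀` is the
image under `Ad(exp X) = exp(ad X)` of `T_{X₀}Λ = ⊕_{α ∈ R⁺} p_{X₀,α}`; the statement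
says that this image is the displayed direct sum. -/
theorem stmt_14 (g : Type*) [NormedAddCommGroup g] [InnerProductSpace ℝ g]
    [FiniteDimensional ℝ g]
    (br : g →ₗ[ℝ] g →ₗ[ℝ] g)
    (halt : ∀ x : g, br x x = 0)
    (hjacobi : ∀ x y z : g, br x (br y z) = br (br x y) z + br y (br x z))
    (hinv : ∀ x y z : g, ⟪br x y, z⟫ = -⟪y, br x z⟫)
    (σ : g →ₗ[ℝ] g) (hσbr : ∀ x y, σ (br x y) = br (σ x) (σ y))
    (hσinv : ∀ x, σ (σ x) = x)
    (k p : Submodule ℝ g)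
    (hk : ∀ x, x ∈ k ↔ σ x = x) (hp : ∀ x, x ∈ p ↔ σ x = -x)
    -- `t₀` is a maximal abelian subalgebra of `g` contained in `p`:
    (t₀ : Submodule ℝ g) (ht₀p : t₀ ≤ p)
    (ht₀ab : ∀ x ∈ t₀, ∀ y ∈ t₀, br x y = 0)
    (ht₀max : ∀ t' : Submodule ℝ g, t' ≤ p → (∀ x ∈ t', ∀ y ∈ t', br x y = 0) →
      t₀ ≤ t' → t' = t₀)
    -- `X₀` is a regular point of `t₀`, `RP` the positive restricted roots `R⁺_{X₀}`:
    (X₀ : t₀)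
    (RP : Finset (t₀ →ₗ[ℝ] ℝ))
    (hRP : ∀ α ∈ RP, α ≠ 0 ∧ restrictedRootSpace br t₀ α ≠ ⊥)
    (hX₀reg : ∀ α ∈ RP, 0 < α X₀)
    (X : t₀) :
    Submodule.map
        (((NormedSpace.exp (LinearMap.toContinuousLinearMap (br (X : g)))) :
            g →L[ℝ] g) : g →ₗ[ℝ] g)
        (⨆ α ∈ RP, (restrictedRootSpace br t₀ α ⊓ p))
      = ⨆ α ∈ RP, Submodule.map
          ((Real.cos (2 * Real.pi * α X)) • (LinearMap.id : g →ₗ[ℝ] g)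
            - (Real.sin (2 * Real.pi * α X))
                • ((-(2 * Real.pi * α X₀)⁻¹) • br (X₀ : g)))
          (restrictedRootSpace br t₀ α ⊓ p) := by
  classical
  have hπ : (0:ℝ) < Real.pi := Real.pi_pos
  -- ad-operators of elements of t₀ commute
  have hcomm : ∀ (Y Z : t₀) (v : g), br (Y:g) (br (Z:g) v) = br (Z:g) (br (Y:g) v) := by
    intro Y Z v
    have hj := hjacobi (Y:g) (Z:g) v
    rw [ht₀ab _ Y.2 _ Z.2] at hj
    simpa using hj
  -- membership characterization of the restricted root space
  have hmem : ∀ (α : t₀ →ₗ[ℝ] ℝ) (η : g), η ∈ restrictedRootSpace br t₀ α →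
      ∀ Y : t₀, br (Y:g) (br (Y:g) η) = (-(4 * Real.pi^2 * (α Y)^2)) • η := by
    intro α η hη Y
    have h1 := (Submodule.mem_iInf _).mp hη Y
    rw [LinearMap.mem_ker] at h1
    simp only [LinearMap.add_apply, LinearMap.comp_apply, LinearMap.smul_apply,
      LinearMap.id_apply] at h1
    rw [neg_smul]
    exact eq_neg_of_add_eq_zero_left h1
  -- stability of the root spaces under ad of elements of t₀
  have hstab : ∀ (α : t₀ →ₗ[ℝ] ℝ) (Z : t₀) (η : g), η ∈ restrictedRootSpace br t₀ α →
      br (Z:g) η ∈ restrictedRootSpace br t₀ α := by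
    intro α Z η hη
    refine (Submodule.mem_iInf _).mpr fun Y => ?_
    rw [LinearMap.mem_ker]
    simp only [LinearMap.add_apply, LinearMap.comp_apply, LinearMap.smul_apply,
      LinearMap.id_apply]
    rw [hcomm Y Z η, hcomm Y Z (br (Y:g) η), hmem α η hη Y, map_smul]
    simp
  rw [Submodule.map_iSup]
  refine iSup_congr fun α => ?_
  rw [Submodule.map_iSup]
  refine iSup_congr fun hα => ?_
  have hαX₀ : 0 < α X₀ := hX₀reg α hα
  have hne : α X₀ ≠ 0 := ne_of_gt hαX₀
  apply map_eq_of_eqOn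
  rintro η ⟨hη₁, hη₂⟩
  set A : g →L[ℝ] g := LinearMap.toContinuousLinearMap (br (X:g)) with hA
  have hAcoe : ∀ v : g, A v = br (X:g) v := fun v => rfl
  -- key identities
  have hAA : A (A η) = (-((2*Real.pi*α X)^2)) • η := by
    rw [hAcoe, hAcoe, hmem α η hη₁ X]
    congr 1
    ring
  have hBB : br (X₀:g) (br (X₀:g) η) = (-(4 * Real.pi^2 * (α X₀)^2)) • η :=
    hmem α η hη₁ X₀
  have hBA : br (X₀:g) (br (X:g) η) = (-(4 * Real.pi^2 * (α X) * (α X₀))) • η := by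
    have hX := hmem α η hη₁ X
    have hX₀ := hmem α η hη₁ X₀
    have hS := hmem α η hη₁ (X + X₀)
    have hco : ((X + X₀ : t₀) : g) = (X:g) + (X₀:g) := rfl
    rw [hco, map_add] at hS
    simp only [LinearMap.add_apply, map_add, map_add] at hS
    rw [hcomm X X₀ η, hX, hX₀] at hS
    linear_combination (norm := module) (2:ℝ)⁻¹ • hS
  -- relation between br X η and br X₀ η
  have hw' : (α X₀) • br (X:g) η = (α X) • br (X₀:g) η := by
    set w : g := (α X₀) • br (X:g) η - (α X) • br (X₀:g) η with hwdef
    have hwmem : w ∈ restrictedRootSpace br t₀ α :=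
      Submodule.sub_mem _ (Submodule.smul_mem _ _ (hstab α X η hη₁))
        (Submodule.smul_mem _ _ (hstab α X₀ η hη₁))
    have hBw : br (X₀:g) w = 0 := by
      rw [hwdef, map_sub, map_smul, map_smul, hBA, hBB]
      module
    have hzero : br (X₀:g) (br (X₀:g) w) = 0 := by rw [hBw, map_zero]
    have h2 := hmem α w hwmem X₀
    rw [hzero] at h2
    have hz : (4*Real.pi^2*(α X₀)^2 : ℝ) ≠ 0 := by positivity
    have : w = 0 := by
      have h3 := h2.symm
      rw [neg_smul, neg_eq_zero, smul_eq_zero] at h3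
      tauto
    rw [hwdef, sub_eq_zero] at this
    exact this
  have hXrel : br (X:g) η = (α X / α X₀) • br (X₀:g) η := by
    have h3 : (α X₀)⁻¹ • ((α X₀) • br (X:g) η) = (α X₀)⁻¹ • ((α X) • br (X₀:g) η) := by
      rw [hw']
    rw [smul_smul, smul_smul, inv_mul_cancel₀ hne, one_smul] at h3
    rw [h3]
    congr 1
    field_simp
  -- compute exp applied
  have hexp := exp_apply_sq A η (2*Real.pi*α X) hAA
  rw [hAcoe, hXrel, smul_smul] at hexp
  have hscal : (∑' k : ℕ, (-1 : ℝ)^k * (2*Real.pi*α X)^(2*k) / ((2*k+1)! : ℝ)) * (α X / α X₀)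
      = Real.sin (2*Real.pi*α X) * (2*Real.pi*α X₀)⁻¹ := by
    rw [← mul_oddCoef (2*Real.pi*α X)]
    field_simp
  rw [hscal] at hexp
  show (NormedSpace.exp A) η = _
  rw [hexp]
  simp only [LinearMap.sub_apply, LinearMap.smul_apply, LinearMap.id_apply, smul_smul]
  module
end
end

section
/- Let T be a totally geodesic submanifold of a Riemannian manifold (S,g) and V a normal vector field along T which is parallel (flat) as a section of the normal bundle. Then the submanifold T' = {(x, ζ + V(x)) : x ∈ T, ζ ∈ T_x T} of TS ≅ T*S is preserved by the canonical almost complex structure J_g associated to the Levi-Civita connection. -/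
open scoped RealInnerProductSpace

/-- Let `T` be a totally geodesic submanifold of a Riemannian manifold
`(S,g)` and `V` a normal vector field along `T` which is parallel (flat) as a section of
the normal bundle.  Then the submanifold
`T' = {(x, ζ + V(x)) : x ∈ T, ζ ∈ T_x T}` of `TS ≅ T*S` is preserved by the canonical
almost complex structure `J_g` associated to the Levi-Civita connection.

Stated in local coordinates: `S` is (an open piece of) the inner product space `E`, the
Levi-Civita connection is encoded by its (symmetric) Christoffel symbols
`Γ : E → E →ₗ E →ₗ E`, and `T` is a linear subspace (e.g. in normal coordinates).
At a point `(x, w)` of `TS = E × E` the horizontal subspace is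
`{(a, −Γ(x)(a)(w)) : a ∈ E}`, the vertical one is `{0} × E`, and `J_g(h,v) = (v,−h)`
with respect to this splitting, which gives
`J(a,b) = (b + Γ x a w, −Γ x (b + Γ x a w) w − a)`.  The tangent space of `T'` at
`(x, ζ + V x)` consists of the velocities `(ẋ, ζ̇ + (DV)_x ẋ)` with `ẋ, ζ̇ ∈ T`, i.e.
of the vectors `(a, b + (DV)_x a)`, `a, b ∈ T`; 'preserved' means `J` maps this set to
itself. -/
theorem stmt_16 (E : Type*) [NormedAddCommGroup E] [InnerProductSpace ℝ E]
    [FiniteDimensional ℝ E]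
    -- the Christoffel symbols of the Levi-Civita connection:
    (Γ : E → E →ₗ[ℝ] E →ₗ[ℝ] E) (hΓsym : ∀ x a b, Γ x a b = Γ x b a)
    -- the totally geodesic submanifold `T`:
    (T : Submodule ℝ E)
    (hTG : ∀ x ∈ T, ∀ a ∈ T, ∀ b ∈ T, Γ x a b ∈ T)
    -- the normal vector field `V` along `T`:
    (V : E → E) (hV : ContDiff ℝ 1 V)
    (hnormal : ∀ x ∈ T, ∀ u ∈ T, ⟪V x, u⟫ = 0)
    -- `V` is flat as a section of the normal bundle: `∇_a V ∈ T_x T` for `a ∈ T_x T`: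
    (hflat : ∀ x ∈ T, ∀ a ∈ T, fderiv ℝ V x a + Γ x a (V x) ∈ T) :
    ∀ x ∈ T, ∀ ζ ∈ T, ∀ a ∈ T, ∀ b ∈ T,
      ∃ a' ∈ T, ∃ b' ∈ T,
        ((b + fderiv ℝ V x a) + Γ x a (ζ + V x),
          -Γ x ((b + fderiv ℝ V x a) + Γ x a (ζ + V x)) (ζ + V x) - a)
        = (a', b' + fderiv ℝ V x a') := by
  intro x hx ζ hζ a ha b hb
  set a' := (b + fderiv ℝ V x a) + Γ x a (ζ + V x) with ha'def
  have ha' : a' ∈ T := by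
    have h1 := hflat x hx a ha
    have h2 := hTG x hx a ha ζ hζ
    have : a' = b + (fderiv ℝ V x a + Γ x a (V x)) + Γ x a ζ := by
      simp [ha'def, map_add]; abel
    rw [this]
    exact T.add_mem (T.add_mem hb h1) h2
  refine ⟨a', ha', -Γ x a' (ζ + V x) - a - fderiv ℝ V x a', ?_, ?_⟩
  · have h1 := hflat x hx a' ha'
    have h2 := hTG x hx a' ha' ζ hζ
    have : -Γ x a' (ζ + V x) - a - fderiv ℝ V x a'
        = -((fderiv ℝ V x a' + Γ x a' (V x)) + Γ x a' ζ + a) := by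
      simp [map_add]; abel
    rw [this]
    exact T.neg_mem (T.add_mem (T.add_mem h1 h2) ha)
  · simp
end
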